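/- Let σ > 0 be real and m ≥ 1 a natural number. Then there exists x ≥ 0 such that 1 − (m · x · e^{−x}) / ( m(1 − e^{−x}) + σ² ) ≤ √( 2σ² / (m + σ²) ). -/

import Mathlib

lemma key_exp_ineq (s : ℝ) (hs : 0 ≤ s) : (1 - s) * Real.exp s ≤ 1 - s ^ 2 / 2 := by
  have hmono : MonotoneOn (fun t : ℝ => 1 - t ^ 2 / 2 - (1 - t) * Real.exp t)
      (Set.Ici (0 : ℝ)) := by
    apply monotoneOn_of_deriv_nonneg (convex_Ici 0)
    · fun_prop
    · intro t ht
      have h1 : HasDerivAt (fun t : ℝ => 1 - t ^ 2 / 2 - (1 - t) * Real.exp t)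
          (t * (Real.exp t - 1)) t := by
        have h2 : HasDerivAt (fun t : ℝ => 1 - t ^ 2 / 2) (-t) t := by
          have := ((hasDerivAt_pow 2 t).div_const 2).const_sub 1
          simpa using this
        have h3 : HasDerivAt (fun t : ℝ => (1 - t) * Real.exp t)
            ((-1) * Real.exp t + (1 - t) * Real.exp t) t :=
          ((hasDerivAt_id t).const_sub 1).mul (Real.hasDerivAt_exp t)
        have := h2.sub h3
        exact this.congr_deriv (by ring)
      exact (HasDerivAt.differentiableAt h1).differentiableWithinAt
    · intro t ht
      have h1 : HasDerivAt (fun t : ℝ => 1 - t ^ 2 / 2 - (1 - t) * Real.exp t)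
          (t * (Real.exp t - 1)) t := by
        have h2 : HasDerivAt (fun t : ℝ => 1 - t ^ 2 / 2) (-t) t := by
          have := ((hasDerivAt_pow 2 t).div_const 2).const_sub 1
          simpa using this
        have h3 : HasDerivAt (fun t : ℝ => (1 - t) * Real.exp t)
            ((-1) * Real.exp t + (1 - t) * Real.exp t) t :=
          ((hasDerivAt_id t).const_sub 1).mul (Real.hasDerivAt_exp t)
        have := h2.sub h3
        exact this.congr_deriv (by ring)
      rw [h1.deriv]
      have ht' : (0:ℝ) ≤ t := by
        simpa using interior_subset (s := Set.Ici (0:ℝ)) ht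
      have : (1:ℝ) ≤ Real.exp t := Real.one_le_exp ht'
      nlinarith
  have h0 : (0:ℝ) ∈ Set.Ici (0:ℝ) := Set.self_mem_Ici
  have hsmem : s ∈ Set.Ici (0:ℝ) := hs
  have := hmono h0 hsmem hs
  simp only [ne_eq] at this
  norm_num at this
  linarith

/-- There is a point `x ≥ 0` at which the RBF central-differencing bound is at most
`√(2σ²/(m + σ²))`. -/
theorem rbf_bound_le_sqrt (σ : ℝ) (hσ : 0 < σ) (m : ℕ) (hm : 1 ≤ m) :
    ∃ x : ℝ, 0 ≤ x ∧
      1 - ((m : ℝ) * x * Real.exp (-x)) / ((m : ℝ) * (1 - Real.exp (-x)) + σ ^ 2) ≤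
        Real.sqrt (2 * σ ^ 2 / ((m : ℝ) + σ ^ 2)) := by
  have hm' : (1:ℝ) ≤ (m:ℝ) := by exact_mod_cast hm
  have hS : (0:ℝ) < (m:ℝ) + σ ^ 2 := by positivity
  set s := Real.sqrt (2 * σ ^ 2 / ((m : ℝ) + σ ^ 2)) with hsdef
  have hs0 : 0 ≤ s := Real.sqrt_nonneg _
  have hs2 : s ^ 2 = 2 * σ ^ 2 / ((m : ℝ) + σ ^ 2) := by
    rw [hsdef, Real.sq_sqrt (by positivity)]
  refine ⟨s, hs0, ?_⟩
  have hexp_pos : 0 < Real.exp (-s) := Real.exp_pos _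
  have hexp_le : Real.exp (-s) ≤ 1 := Real.exp_le_one_iff.mpr (by linarith)
  have hD : 0 < (m : ℝ) * (1 - Real.exp (-s)) + σ ^ 2 := by nlinarith
  -- key: (1-s) * exp s ≤ 1 - s^2/2 = m / (m + σ^2)
  have hkey : (1 - s) * Real.exp s ≤ (m : ℝ) / ((m : ℝ) + σ ^ 2) := by
    have := key_exp_ineq s hs0
    have heq : 1 - s ^ 2 / 2 = (m : ℝ) / ((m : ℝ) + σ ^ 2) := by
      field_simp [hs2]
      rw [hs2]
      field_simp
      ring
    linarith [heq ▸ this]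
  -- multiply by exp(-s) * (m + σ^2) > 0
  have hkey2 : (1 - s) * ((m : ℝ) + σ ^ 2) ≤ (m : ℝ) * Real.exp (-s) := by
    have hee : Real.exp s * Real.exp (-s) = 1 := by
      rw [← Real.exp_add]; simp
    have h1 : (1 - s) * Real.exp s * (Real.exp (-s) * ((m : ℝ) + σ ^ 2)) ≤
        ((m : ℝ) / ((m : ℝ) + σ ^ 2)) * (Real.exp (-s) * ((m : ℝ) + σ ^ 2)) := by
      apply mul_le_mul_of_nonneg_right hkey
      positivity
    calc (1 - s) * ((m : ℝ) + σ ^ 2)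
        = (1 - s) * Real.exp s * (Real.exp (-s) * ((m : ℝ) + σ ^ 2)) := by
          rw [show (1 - s) * Real.exp s * (Real.exp (-s) * ((m : ℝ) + σ ^ 2))
            = (1 - s) * ((m : ℝ) + σ ^ 2) * (Real.exp s * Real.exp (-s)) by ring, hee]
          ring
      _ ≤ ((m : ℝ) / ((m : ℝ) + σ ^ 2)) * (Real.exp (-s) * ((m : ℝ) + σ ^ 2)) := h1
      _ = (m : ℝ) * Real.exp (-s) := by field_simp
  -- hence (1-s) * D ≤ N
  have hND : (1 - s) * ((m : ℝ) * (1 - Real.exp (-s)) + σ ^ 2) ≤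
      (m : ℝ) * s * Real.exp (-s) := by nlinarith
  have : (1 - s) ≤ ((m : ℝ) * s * Real.exp (-s)) / ((m : ℝ) * (1 - Real.exp (-s)) + σ ^ 2) :=
    (le_div_iff₀ hD).mpr hND
  linarith
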